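/- Let p ≥ 7 be an integer. For each q = 1, …, p let m_q ≥ 1 and let α_{q,1}, …, α_{q,m_q} be nonzero complex numbers satisfying the palindromic symmetry α_{q, m_q + 1 − i} = α_{q,i} for all i, the consistency condition ∑_{i=1}^{m_q} α_{q,i} = 1, and the order-raising condition ∑_{i=1}^{m_q} α_{q,i}^{2q+1} = 0. Then there exist indices i_1 ∈ {1,…,m_1}, …, i_p ∈ {1,…,m_p} such that Re(∏_{q=1}^{p} α_{q,i_q}) < 0. -/

import Mathlib

open Complex Finset Real

lemma aux_angle_eq {x y : ℝ} (h : (x : Real.Angle) = (y : Real.Angle))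
    (hx : x ∈ Set.Ioc (-π) π) (hy : y ∈ Set.Ioc (-π) π) : x = y := by
  rw [Real.Angle.angle_eq_iff_two_pi_dvd_sub] at h
  obtain ⟨k, hk⟩ := h
  have hπ := Real.pi_pos
  rcases lt_trichotomy k 0 with hk0 | hk0 | hk0
  · have h1 : (k : ℝ) ≤ -1 := by exact_mod_cast (by omega : k ≤ -1)
    nlinarith [hx.1, hy.2]
  · subst hk0; push_cast at hk; linarith
  · have h1 : (1 : ℝ) ≤ (k : ℝ) := by exact_mod_cast hk0
    nlinarith [hx.2, hy.1]

lemma aux_spread {mm n : ℕ} (hmm : 0 < mm) (hn : 3 ≤ n) (z : Fin mm → ℂ)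
    (hz : ∀ i, z i ≠ 0) (hsum : ∑ i, z i ^ n = 0) :
    ∃ i j, π / n ≤ |Complex.arg (z i / z j)| := by
  by_contra hcon
  push_neg at hcon
  have hπ := Real.pi_pos
  have hn3 : (3 : ℝ) ≤ (n : ℝ) := by exact_mod_cast hn
  have hn0 : (0 : ℝ) < n := by linarith
  have hpin : π / n ≤ π / 3 := by
    apply div_le_div_of_nonneg_left (le_of_lt hπ) (by norm_num) hn3
  set i0 : Fin mm := ⟨0, hmm⟩ with hi0
  set φ : Fin mm → ℝ := fun i => Complex.arg (z i / z i0) with hφ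
  have hφbound : ∀ i, |φ i| < π / n := fun i => hcon i i0
  have key : ∀ i j, Complex.arg (z i / z j) = φ i - φ j := by
    intro i j
    have hne : ∀ k, z k / z i0 ≠ 0 := fun k => div_ne_zero (hz k) (hz i0)
    have hdiv : z i / z j = (z i / z i0) / (z j / z i0) := by
      field_simp [hz i, hz j, hz i0]
    have h1 : ((Complex.arg (z i / z j) : Real.Angle)) = ((φ i - φ j : ℝ) : Real.Angle) := by
      rw [hdiv, Complex.arg_div_coe_angle (hne i) (hne j), Real.Angle.coe_sub]
    have b1 := abs_lt.mp (hφbound i)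
    have b2 := abs_lt.mp (hφbound j)
    refine aux_angle_eq h1 (Complex.arg_mem_Ioc _) ⟨by linarith, by linarith⟩
  obtain ⟨j0, -, hj0⟩ := Finset.exists_min_image Finset.univ φ ⟨i0, Finset.mem_univ _⟩
  set ψ : Fin mm → ℝ := fun i => Complex.arg (z i / z j0) with hψ
  have hψ0 : ∀ i, 0 ≤ ψ i := by
    intro i
    have h1 : ψ i = φ i - φ j0 := key i j0
    have h2 := hj0 i (Finset.mem_univ i)
    linarith
  have hψlt : ∀ i, ψ i < π / n := fun i => (abs_lt.mp (hcon i j0)).2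
  have hnψ : ∀ i, 0 ≤ (n : ℝ) * ψ i ∧ (n : ℝ) * ψ i < π := by
    intro i
    constructor
    · exact mul_nonneg (le_of_lt hn0) (hψ0 i)
    · rw [mul_comm]
      exact (lt_div_iff₀ hn0).mp (hψlt i)
  set r : Fin mm → ℝ := fun i => ‖z i / z j0‖ with hr
  have hrpos : ∀ i, 0 < r i := fun i => norm_pos_iff.mpr (div_ne_zero (hz i) (hz j0))
  have hzi : ∀ i, z i = z j0 * ((r i : ℂ) * Complex.exp ((ψ i : ℝ) * Complex.I)) := by
    intro i
    rw [hr, hψ]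
    simp only
    rw [Complex.norm_mul_exp_arg_mul_I (z i / z j0)]
    rw [mul_div_cancel₀ _ (hz j0)]
  set T : ℂ := ∑ i, ((r i ^ n : ℝ) : ℂ) * Complex.exp (((n : ℝ) * ψ i : ℝ) * Complex.I) with hT
  have hTz : T = 0 := by
    have h1 : z j0 ^ n * T = 0 := by
      rw [hT, Finset.mul_sum, ← hsum]
      refine Finset.sum_congr rfl fun i _ => ?_
      conv_rhs => rw [hzi i]
      have he : Complex.exp (((ψ i : ℝ) : ℂ) * Complex.I) ^ n
          = Complex.exp ((((n : ℝ) * ψ i : ℝ) : ℂ) * Complex.I) := by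
        rw [← Complex.exp_nat_mul]
        congr 1
        push_cast
        ring
      rw [mul_pow, mul_pow, he, ← Complex.ofReal_pow]
    exact (mul_eq_zero.mp h1).resolve_left (pow_ne_zero _ (hz j0))
  have hIm : ∑ i, r i ^ n * Real.sin ((n : ℝ) * ψ i) = 0 := by
    have h1 : T.im = 0 := by rw [hTz]; simp
    rw [hT, Complex.im_sum] at h1
    rw [← h1]
    refine Finset.sum_congr rfl fun i _ => ?_
    rw [Complex.mul_im, Complex.ofReal_re, Complex.ofReal_im,
      Complex.exp_ofReal_mul_I_im, Complex.exp_ofReal_mul_I_re]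
    ring
  have hall : ∀ i ∈ Finset.univ, r i ^ n * Real.sin ((n : ℝ) * ψ i) = 0 := by
    rw [← Finset.sum_eq_zero_iff_of_nonneg]
    · exact hIm
    · intro i _
      exact mul_nonneg (le_of_lt (pow_pos (hrpos i) n))
        (Real.sin_nonneg_of_nonneg_of_le_pi (hnψ i).1 (le_of_lt (hnψ i).2))
  have hψzero : ∀ i, ψ i = 0 := by
    intro i
    by_contra hne
    have h1 : 0 < ψ i := lt_of_le_of_ne (hψ0 i) (Ne.symm hne)
    have h2 : 0 < Real.sin ((n : ℝ) * ψ i) :=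
      Real.sin_pos_of_pos_of_lt_pi (mul_pos hn0 h1) (hnψ i).2
    have h3 := hall i (Finset.mem_univ i)
    nlinarith [pow_pos (hrpos i) n]
  have hRe : T.re = ∑ i, r i ^ n := by
    rw [hT, Complex.re_sum]
    refine Finset.sum_congr rfl fun i _ => ?_
    rw [hψzero i]
    simp [Complex.mul_re, Complex.exp_ofReal_mul_I_re, Complex.exp_ofReal_mul_I_im]
    rw [← Complex.ofReal_pow, Complex.ofReal_re]
  have hpos : (0 : ℝ) < ∑ i, r i ^ n :=
    Finset.sum_pos (fun i _ => pow_pos (hrpos i) n) ⟨i0, Finset.mem_univ _⟩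
  rw [hTz] at hRe
  simp at hRe
  linarith

theorem stmt_7 (p : ℕ) (hp : 7 ≤ p) (m : Fin p → ℕ) (hm : ∀ q, 1 ≤ m q)
    (α : (q : Fin p) → Fin (m q) → ℂ)
    (hα0 : ∀ q i, α q i ≠ 0)
    (hsym : ∀ q (i : Fin (m q)), α q i.rev = α q i)
    (hcons : ∀ q, ∑ i, α q i = 1)
    (horder : ∀ q : Fin p, ∑ i, (α q i) ^ (2 * q.val + 3) = 0) :
    ∃ i : (q : Fin p) → Fin (m q), (∏ q, α q (i q)).re < 0 := by
  by_contra hcontra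
  push_neg at hcontra
  have hπ := Real.pi_pos
  have hp0 : 0 < p := by omega
  classical
  have hPne : ∀ c : (q : Fin p) → Fin (m q), (∏ q, α q (c q)) ≠ 0 := fun c =>
    Finset.prod_ne_zero_iff.mpr fun q _ => hα0 q (c q)
  by_cases hA : ∃ (q : Fin p) (i j : Fin (m q)), Complex.arg (α q i / α q j) = π
  · -- Case A: some ratio is a negative real number
    obtain ⟨q, i, j, hij⟩ := hA
    rw [Complex.arg_eq_pi_iff] at hij
    set ρ : ℝ := (α q i / α q j).re with hρdef
    have hρneg : ρ < 0 := hij.1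
    have hratio : α q i = (ρ : ℂ) * α q j := by
      have h1 : (α q i / α q j) = (ρ : ℂ) := by
        apply Complex.ext
        · simp [hρdef]
        · simp [hij.2]
      rw [← h1, div_mul_cancel₀ _ (hα0 q j)]
    have hupdate : ∀ (c : (q' : Fin p) → Fin (m q')) (k : Fin (m q)),
        (∏ q', α q' (Function.update c q k q'))
          = α q k * ∏ q' ∈ Finset.univ.erase q, α q' (c q') := by
      intro c k
      rw [← Finset.mul_prod_erase Finset.univ _ (Finset.mem_univ q), Function.update_self]
      congr 1
      exact Finset.prod_congr rfl fun q' hq' => by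
        rw [Function.update_of_ne (Finset.ne_of_mem_erase hq')]
    have hK : ∀ c : (q' : Fin p) → Fin (m q'),
        (α q i * ∏ q' ∈ Finset.univ.erase q, α q' (c q')).re = 0 := by
      intro c
      have h1 : 0 ≤ (α q i * ∏ q' ∈ Finset.univ.erase q, α q' (c q')).re := by
        have := hcontra (Function.update c q i); rwa [hupdate c i] at this
      have h2 : 0 ≤ (α q j * ∏ q' ∈ Finset.univ.erase q, α q' (c q')).re := by
        have := hcontra (Function.update c q j); rwa [hupdate c j] at this
      have h3 : (α q i * ∏ q' ∈ Finset.univ.erase q, α q' (c q')).re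
          = ρ * (α q j * ∏ q' ∈ Finset.univ.erase q, α q' (c q')).re := by
        rw [hratio, mul_assoc, Complex.re_ofReal_mul]
      nlinarith
    -- every other level is real
    have hreal : ∀ q' : Fin p, q' ≠ q → ∀ k, (α q' k).im = 0 := by
      intro q' hq' k
      set c0 : (q'' : Fin p) → Fin (m q'') := fun q'' => ⟨0, hm q''⟩ with hc0
      have hq'mem : q' ∈ Finset.univ.erase q := Finset.mem_erase.mpr ⟨hq', Finset.mem_univ _⟩
      set B : ℂ := ∏ q'' ∈ (Finset.univ.erase q).erase q', α q'' (c0 q'') with hB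
      have hsplit2 : ∀ k' : Fin (m q'),
          (∏ q'' ∈ Finset.univ.erase q, α q'' (Function.update c0 q' k' q''))
            = α q' k' * B := by
        intro k'
        rw [← Finset.mul_prod_erase (Finset.univ.erase q)
          (fun q'' => α q'' (Function.update c0 q' k' q'')) hq'mem, Function.update_self]
        congr 1
        exact Finset.prod_congr rfl fun q'' hq'' => by
          rw [Function.update_of_ne (Finset.ne_of_mem_erase hq'')]
      set w : ℂ := α q i * B with hw
      have hBne : B ≠ 0 := Finset.prod_ne_zero_iff.mpr fun _ _ => hα0 _ _
      have hwne : w ≠ 0 := mul_ne_zero (hα0 q i) hBne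
      have hwk : ∀ k' : Fin (m q'), (w * α q' k').re = 0 := by
        intro k'
        have h0 := hK (Function.update c0 q' k')
        rw [hsplit2 k'] at h0
        have he : w * α q' k' = α q i * (α q' k' * B) := by rw [hw]; ring
        rw [he]; exact h0
      have hwre : w.re = 0 := by
        have h1 : (∑ k', w * α q' k').re = 0 := by
          rw [Complex.re_sum]
          exact Finset.sum_eq_zero fun k' _ => hwk k'
        rw [← Finset.mul_sum, hcons q', mul_one] at h1
        exact h1
      have hwim : w.im ≠ 0 := by
        intro h0
        exact hwne (Complex.ext hwre h0)
      have h2 : w.im * (α q' k).im = 0 := by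
        have h3 := hwk k
        rw [Complex.mul_re, hwre, zero_mul, zero_sub, neg_eq_zero] at h3
        exact h3
      exact (mul_eq_zero.mp h2).resolve_left hwim
    have hcast : ∀ (q' : Fin p), q' ≠ q → ∀ k, α q' k = ((α q' k).re : ℂ) := by
      intro q' hq' k
      apply Complex.ext
      · simp
      · simp [hreal q' hq' k]
    have hrene : ∀ (q' : Fin p), q' ≠ q → ∀ k, (α q' k).re ≠ 0 := by
      intro q' hq' k h0
      exact hα0 q' k (by rw [hcast q' hq' k, h0]; simp)
    -- every other level has a negative and a positive element
    have hneg : ∀ q' : Fin p, q' ≠ q → ∃ k, (α q' k).re < 0 := by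
      intro q' hq'
      by_contra hno
      push_neg at hno
      have hpos : ∀ k, 0 < (α q' k).re := fun k =>
        lt_of_le_of_ne (hno k) (Ne.symm (hrene q' hq' k))
      have h0 := horder q'
      have h1 : (0 : ℝ) < ((∑ k, (α q' k) ^ (2 * q'.val + 3)).re) := by
        rw [Complex.re_sum]
        refine Finset.sum_pos (fun k _ => ?_) ⟨⟨0, hm q'⟩, Finset.mem_univ _⟩
        rw [hcast q' hq' k, ← Complex.ofReal_pow, Complex.ofReal_re]
        exact pow_pos (hpos k) _
      rw [h0] at h1
      simp at h1
    have hpos : ∀ q' : Fin p, q' ≠ q → ∃ k, 0 < (α q' k).re := by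
      intro q' hq'
      by_contra hno
      push_neg at hno
      have h1 : (∑ k, α q' k).re = 1 := by rw [hcons q']; simp
      rw [Complex.re_sum] at h1
      have h2 : (∑ k, (α q' k).re) ≤ 0 := Finset.sum_nonpos fun k _ => hno k
      linarith
    -- pick q1 ≠ q
    obtain ⟨q1, hq1⟩ : ∃ q1 : Fin p, q1 ≠ q := by
      by_cases h : q = ⟨0, hp0⟩
      · refine ⟨⟨1, by omega⟩, ?_⟩
        rw [h]
        intro hc
        have := congrArg Fin.val hc
        simp at this
      · exact ⟨⟨0, hp0⟩, fun hc => h hc.symm⟩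
    -- positive-choice and flipped choices
    set cp : (q'' : Fin p) → Fin (m q'') := fun q'' =>
      if h : q'' = q then ⟨0, hm q''⟩ else Classical.choose (hpos q'' h) with hcp
    have hcpspec : ∀ q'' : Fin p, q'' ≠ q → 0 < (α q'' (cp q'')).re := by
      intro q'' h
      rw [hcp]
      simp only [dif_neg h]
      exact Classical.choose_spec (hpos q'' h)
    set kn : Fin (m q1) := Classical.choose (hneg q1 hq1) with hkn
    have hknspec : (α q1 kn).re < 0 := Classical.choose_spec (hneg q1 hq1)
    set cn : (q'' : Fin p) → Fin (m q'') := Function.update cp q1 kn with hcn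
    -- the two real product values
    have hRestreal : ∀ c : (q'' : Fin p) → Fin (m q''),
        (∏ q'' ∈ Finset.univ.erase q, α q'' (c q''))
          = ((∏ q'' ∈ Finset.univ.erase q, (α q'' (c q'')).re : ℝ) : ℂ) := by
      intro c
      rw [Complex.ofReal_prod]
      exact Finset.prod_congr rfl fun q'' hq'' =>
        hcast q'' (Finset.ne_of_mem_erase hq'') (c q'')
    set tp : ℝ := ∏ q'' ∈ Finset.univ.erase q, (α q'' (cp q'')).re with htp
    set tn : ℝ := ∏ q'' ∈ Finset.univ.erase q, (α q'' (cn q'')).re with htn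
    have htppos : 0 < tp := by
      rw [htp]
      exact Finset.prod_pos fun q'' hq'' => hcpspec q'' (Finset.ne_of_mem_erase hq'')
    have hq1mem : q1 ∈ Finset.univ.erase q := Finset.mem_erase.mpr ⟨hq1, Finset.mem_univ _⟩
    have htnneg : tn < 0 := by
      rw [htn, ← Finset.mul_prod_erase (Finset.univ.erase q)
        (fun q'' => (α q'' (cn q'')).re) hq1mem]
      apply mul_neg_of_neg_of_pos
      · rw [hcn, Function.update_self]
        exact hknspec
      · refine Finset.prod_pos fun q'' hq'' => ?_
        have h1 : q'' ≠ q1 := Finset.ne_of_mem_erase hq''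
        have h2 : q'' ≠ q := Finset.ne_of_mem_erase (Finset.mem_of_mem_erase hq'')
        rw [hcn, Function.update_of_ne h1]
        exact hcpspec q'' h2
    -- conclude all level-q coefficients have zero real part
    have hfin : ∀ k : Fin (m q), (α q k).re = 0 := by
      intro k
      have h1 : 0 ≤ (α q k * ((tp : ℝ) : ℂ)).re := by
        have := hcontra (Function.update cp q k)
        rw [hupdate cp k, hRestreal cp, ← htp] at this
        exact this
      have h2 : 0 ≤ (α q k * ((tn : ℝ) : ℂ)).re := by
        have := hcontra (Function.update cn q k)
        rw [hupdate cn k, hRestreal cn, ← htn] at this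
        exact this
      have e1 : (α q k * ((tp : ℝ) : ℂ)).re = (α q k).re * tp := by
        rw [Complex.mul_re]; simp
      have e2 : (α q k * ((tn : ℝ) : ℂ)).re = (α q k).re * tn := by
        rw [Complex.mul_re]; simp
      rw [e1] at h1; rw [e2] at h2
      rcases lt_trichotomy ((α q k).re) 0 with h | h | h
      · exfalso; nlinarith
      · exact h
      · exfalso; nlinarith
    have h1 : (∑ k, α q k).re = 0 := by
      rw [Complex.re_sum]
      exact Finset.sum_eq_zero fun k _ => hfin k
    rw [hcons q] at h1
    simp at h1
  · -- Case B: no ratio has argument π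
    push_neg at hA
    have hB1 : ∀ q : Fin p, ∃ i j : Fin (m q),
        π / ((2 * q.val + 3 : ℕ) : ℝ) ≤ Complex.arg (α q i / α q j) ∧
          Complex.arg (α q i / α q j) < π := by
      intro q
      obtain ⟨i, j, hij⟩ := aux_spread (hm q) (by omega) (α q) (hα0 q) (horder q)
      rcases le_or_gt 0 (Complex.arg (α q i / α q j)) with hsign | hsign
      · exact ⟨i, j, by rwa [_root_.abs_of_nonneg hsign] at hij,
          lt_of_le_of_ne (Complex.arg_le_pi _) (hA q i j)⟩
      · refine ⟨j, i, ?_, ?_⟩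
        · have hinv : α q j / α q i = (α q i / α q j)⁻¹ := (inv_div _ _).symm
          rw [hinv, Complex.arg_inv, if_neg (hA q i j)]
          rwa [_root_.abs_of_neg hsign] at hij
        · have hinv : α q j / α q i = (α q i / α q j)⁻¹ := (inv_div _ _).symm
          rw [hinv, Complex.arg_inv, if_neg (hA q i j)]
          have := (Complex.arg_mem_Ioc (α q i / α q j)).1
          linarith
    choose u l hul hult using hB1
    set c : ℕ → ((q : Fin p) → Fin (m q)) := fun t q => if q.val < t then u q else l q with hc
    have hAbs : ∀ t, |Complex.arg (∏ q, α q (c t q))| ≤ π / 2 := fun t =>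
      Complex.abs_arg_le_pi_div_two_iff.mpr (hcontra (c t))
    have hstep : ∀ t, t < p →
        Complex.arg (∏ q, α q (c t q)) + π / ((2 * t + 3 : ℕ) : ℝ)
          ≤ Complex.arg (∏ q, α q (c (t + 1) q)) := by
      intro t ht
      set qt : Fin p := ⟨t, ht⟩ with hqt
      have hceq : ∀ q' : Fin p, q' ≠ qt → c (t + 1) q' = c t q' := by
        intro q' hne
        have hv : q'.val ≠ t := fun h => hne (Fin.ext h)
        rw [hc]
        simp only
        by_cases h : q'.val < t
        · rw [if_pos h, if_pos (by omega)]
        · rw [if_neg h, if_neg (by omega)]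
      have hct : c t qt = l qt := by
        rw [hc]; simp only; rw [if_neg (by simp [hqt])]
      have hct1 : c (t + 1) qt = u qt := by
        rw [hc]; simp only; rw [if_pos (by simp [hqt])]
      have hsplitt : ∀ s : ℕ, (∏ q, α q (c s q))
          = α qt (c s qt) * ∏ q' ∈ Finset.univ.erase qt, α q' (c s q') := fun s =>
        (Finset.mul_prod_erase Finset.univ _ (Finset.mem_univ qt)).symm
      have hprodrel : (∏ q, α q (c (t + 1) q))
          = (∏ q, α q (c t q)) * (α qt (u qt) / α qt (l qt)) := by
        rw [hsplitt (t + 1), hsplitt t, hct, hct1]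
        have hE : (∏ q' ∈ Finset.univ.erase qt, α q' (c (t + 1) q'))
            = ∏ q' ∈ Finset.univ.erase qt, α q' (c t q') :=
          Finset.prod_congr rfl fun q' hq' => by
            rw [hceq q' (Finset.ne_of_mem_erase hq')]
        rw [hE]
        field_simp [hα0 qt (l qt)]
      have hρne : α qt (u qt) / α qt (l qt) ≠ 0 := div_ne_zero (hα0 _ _) (hα0 _ _)
      have hθ1 : π / ((2 * t + 3 : ℕ) : ℝ) ≤ Complex.arg (α qt (u qt) / α qt (l qt)) :=
        hul qt
      have hθ2 : Complex.arg (α qt (u qt) / α qt (l qt)) < π := hult qt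
      have hθpos : 0 < Complex.arg (α qt (u qt) / α qt (l qt)) :=
        lt_of_lt_of_le (by positivity) hθ1
      have hA1 := abs_le.mp (hAbs t)
      rcases le_or_gt (Complex.arg (∏ q, α q (c t q))
          + Complex.arg (α qt (u qt) / α qt (l qt))) π with hle | hgt
      · have heq : Complex.arg (∏ q, α q (c (t + 1) q))
            = Complex.arg (∏ q, α q (c t q)) + Complex.arg (α qt (u qt) / α qt (l qt)) := by
          rw [hprodrel]
          exact Complex.arg_mul (hPne (c t)) hρne ⟨by linarith, hle⟩
        linarith
      · exfalso
        have hangle : ((Complex.arg (∏ q, α q (c (t + 1) q)) : Real.Angle))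
            = (((Complex.arg (∏ q, α q (c t q))
              + Complex.arg (α qt (u qt) / α qt (l qt)) - 2 * π : ℝ)) : Real.Angle) := by
          rw [hprodrel, Complex.arg_mul_coe_angle (hPne (c t)) hρne, ← Real.Angle.coe_add,
            Real.Angle.angle_eq_iff_two_pi_dvd_sub]
          exact ⟨1, by ring⟩
        have heq := aux_angle_eq hangle (Complex.arg_mem_Ioc _)
          ⟨by linarith, by linarith⟩
        have hA2 := abs_le.mp (hAbs (t + 1))
        linarith [hA2.1]
    have hind : ∀ t, t ≤ p →
        -(π / 2) + ∑ s ∈ Finset.range t, π / ((2 * s + 3 : ℕ) : ℝ)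
          ≤ Complex.arg (∏ q, α q (c t q)) := by
      intro t
      induction t with
      | zero => intro _; simpa using (abs_le.mp (hAbs 0)).1
      | succ t ih =>
        intro ht
        have h1 := ih (by omega)
        have h2 := hstep t (by omega)
        rw [Finset.sum_range_succ]
        linarith
    have hfinal := hind p le_rfl
    have hup := (abs_le.mp (hAbs p)).2
    have hsub : (∑ s ∈ Finset.range 7, π / ((2 * s + 3 : ℕ) : ℝ))
        ≤ ∑ s ∈ Finset.range p, π / ((2 * s + 3 : ℕ) : ℝ) := by
      refine Finset.sum_le_sum_of_subset_of_nonneg (Finset.range_subset_range.mpr hp) ?_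
      intro s _ _
      positivity
    have h7 : π < ∑ s ∈ Finset.range 7, π / ((2 * s + 3 : ℕ) : ℝ) := by
      have he : (∑ s ∈ Finset.range 7, π / ((2 * s + 3 : ℕ) : ℝ))
          = π / 3 + π / 5 + π / 7 + π / 9 + π / 11 + π / 13 + π / 15 := by
        simp [Finset.sum_range_succ]
        norm_num
      rw [he]
      linarith
    linarith
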